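/- Let r = a − Lλ ∈ R_0 be a non-decreasing integer sequence with a a weight-0 spin configuration, and let η = γ_λ(λ), w = w_{γ_λ(a)}, b = γ_λ(a). Then r is regular (i.e. (ζ_0, α) ∉ {−1,0,1} for every α ∈ S(x_r)) if and only if (1) the path p(b) is dominant, and (2) for each pair 1 ≤ i < j ≤ n with b_i = 1, b_j = L and #{k ≤ i : b_k = 1} = #{k ≤ j : b_k = L}, one has η_j − η_i ∈ {0,1}. -/

import Mathlib

noncomputable section

/-!
Regularity of elements of the affine Weyl group (Lemma on regular sequences).
Fix `L ≥ 2`, `m ≥ 1`, `n = Lm`.  A sequence `r = a − Lλ ∈ R_0` is given by a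
weight-0 spin configuration `a : Fin n → {1,…,L}` (each value occurring `m`
times) and `λ : Fin n → ℤ` with `r` non-decreasing.  `γ_λ ∈ S_n` is the shortest
permutation with `γ_λ(λ)` antidominant (non-decreasing as a coordinate sequence),
`w_b ∈ W̄^β` is the element attached to the spin configuration `b = γ_λ(a)`
(characterized by `b(w_b(j)) = block(j)` and increasing rows), `η = γ_λ(λ)`,
and `x_r = t_λ·γ_λ^{-1}·w_{γ_λ(a)}`, with finite part `σ = γ_λ^{-1}·w_b`.
`x_r` sends the affine root `ε_i − ε_j + kδ` to
`ε_{σ(i)} − ε_{σ(j)} + (k − λ_{σ(i)} + λ_{σ(j)})δ`, and the pairing of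
`ζ_0 = Lc* + Σ_a Σ_{i ∈ block a} (i − a − am)ε_i` with `ε_i − ε_j + kδ` is
`c0_i − c0_j + kL`.  Regularity means this pairing avoids `{−1,0,1}` on
`S(x_r) = R_+ ∩ x_r^{-1}(R_-)`.
-/

namespace RegSeq

variable (L m : ℕ)

/-- The coefficient of `ε_i` in `ζ_0` (for `κ = L`, `ν(a) = a`):
`i − a − am` for `i` in the (1-based) block `a` (here `i : Fin (L*m)` 0-based,
whose block is `i/m + 1`). -/
def c0 (i : Fin (L * m)) : ℤ :=
  (i.1 + 1 : ℤ) - ((i.1 / m : ℕ) + 1 : ℤ) - ((i.1 / m : ℕ) + 1 : ℤ) * m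

/-- Positivity of the affine root `ε_i − ε_j + kδ` (with `i ≠ j`). -/
def PosRoot (i j : Fin (L * m)) (k : ℤ) : Prop := 0 < k ∨ (k = 0 ∧ i < j)

/-- The number of inversions (= length) of a permutation. -/
def invCount (w : Equiv.Perm (Fin (L * m))) : ℕ :=
  (Finset.univ.filter
    (fun p : Fin (L * m) × Fin (L * m) => p.1 < p.2 ∧ w p.2 < w p.1)).card

/-! ### Auxiliary lemmas -/

lemma div_helper {m : ℕ} (hm : 0 < m) (c x : ℕ) : x / m = c ↔ c*m ≤ x ∧ x < c*m + m := by
  constructor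
  · rintro rfl
    refine ⟨Nat.div_mul_le_self x m, ?_⟩
    have h1 := Nat.div_add_mod x m
    have h2 := Nat.mod_lt x hm
    rw [mul_comm]
    omega
  · rintro ⟨h1, h2⟩
    exact Nat.div_eq_of_lt_le h1 (by rw [Nat.succ_mul]; omega)

lemma card_filter_val (n : ℕ) (P : ℕ → Prop) [DecidablePred P] :
    (Finset.univ.filter (fun x : Fin n => P x.1)).card = ((Finset.range n).filter P).card := by
  have h : ((Finset.range n).filter P) = (Finset.univ.filter (fun x : Fin n => P x.1)).image Fin.val := by
    ext y
    simp only [Finset.mem_image, Finset.mem_filter, Finset.mem_range, Finset.mem_univ, true_and]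
    constructor
    · rintro ⟨hy, hP⟩; exact ⟨⟨y, hy⟩, hP, rfl⟩
    · rintro ⟨x, hP, rfl⟩; exact ⟨x.2, hP⟩
  rw [h, Finset.card_image_of_injective _ Fin.val_injective]

lemma card_block {L m : ℕ} (hm : 0 < m) (c : ℕ) (hc : c < L) :
    (Finset.univ.filter (fun j : Fin (L*m) => j.1 / m = c)).card = m := by
  rw [card_filter_val (L*m) (fun y => y / m = c)]
  have h : ((Finset.range (L*m)).filter (fun x => x / m = c)) = Finset.Ico (c*m) (c*m+m) := by
    ext x
    simp only [Finset.mem_filter, Finset.mem_range, Finset.mem_Ico, div_helper hm]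
    constructor
    · rintro ⟨_, h1, h2⟩; exact ⟨h1, h2⟩
    · rintro ⟨h1, h2⟩
      refine ⟨lt_of_lt_of_le h2 ?_, h1, h2⟩
      have : (c+1)*m ≤ L*m := Nat.mul_le_mul_right m hc
      rw [Nat.succ_mul] at this; omega
  rw [h, Nat.card_Ico]; omega

lemma card_slot {L m : ℕ} (hm : 0 < m) (j : Fin (L*m)) :
    (Finset.univ.filter (fun x : Fin (L*m) => x.1 < j.1 ∧ x.1 / m = j.1 / m)).card = j.1 % m := by
  rw [card_filter_val (L*m) (fun y => y < j.1 ∧ y / m = j.1 / m)]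
  have h : ((Finset.range (L*m)).filter (fun x => x < j.1 ∧ x / m = j.1 / m))
      = Finset.Ico (j.1/m*m) j.1 := by
    ext x
    simp only [Finset.mem_filter, Finset.mem_range, Finset.mem_Ico]
    constructor
    · rintro ⟨_, h1, h2⟩
      exact ⟨h2 ▸ Nat.div_mul_le_self x m, h1⟩
    · rintro ⟨h1, h2⟩
      have hx : x / m = j.1 / m := by
        refine Nat.div_eq_of_lt_le h1 ?_
        have := (div_helper hm (j.1/m) j.1).mp rfl
        rw [Nat.succ_mul]; omega
      exact ⟨lt_trans h2 j.2, h2, hx⟩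
  rw [h, Nat.card_Ico]
  have h1 := Nat.div_add_mod j.1 m
  rw [mul_comm] at h1
  omega

variable {N : ℕ}

def fmap (p q : Fin N) (z : Fin N × Fin N) : Fin N × Fin N :=
  ( if z.1 = p ∧ q < z.2 then q else if z.1 = q then p else z.1,
    if z.2 = q ∧ z.1 < p then p else if z.2 = p then q else z.2 )

lemma fmap_invol (p q : Fin N) (hpq : p < q) (x y : Fin N) (hxy : x < y) :
    fmap p q (fmap p q (x, y)) = (x, y) := by
  simp only [fmap, Prod.mk.injEq]
  split_ifs <;>
    simp only [Fin.lt_def, Fin.ext_iff, not_and, not_lt, not_true, true_and, and_true,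
      false_and, and_false, true_implies, false_implies, implies_true, not_false_iff] at * <;> omega

lemma fmap_fst_lt_snd (p q : Fin N) (hpq : p < q) (x y : Fin N) (hxy : x < y) :
    (fmap p q (x, y)).1 < (fmap p q (x, y)).2 := by
  simp only [fmap]
  split_ifs <;>
    simp only [Fin.lt_def, Fin.ext_iff, not_and, not_lt, not_true, true_and, and_true,
      false_and, and_false, true_implies, false_implies, implies_true, not_false_iff] at * <;> omega

lemma fmap_mem (w : Equiv.Perm (Fin N)) (p q x y : Fin N) (hpq : p < q) (hw : w q < w p)
    (hxy : x < y) (hinv : w ((Equiv.swap p q) y) < w ((Equiv.swap p q) x)) :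
    w (fmap p q (x, y)).2 < w (fmap p q (x, y)).1 ∧ fmap p q (x, y) ≠ (p, q) := by
  rw [Equiv.swap_apply_def, Equiv.swap_apply_def] at hinv
  have hwinj : ∀ s t : Fin N, s = t → w s = w t := fun s t h => by rw [h]
  have h1 := hwinj x p
  have h2 := hwinj x q
  have h3 := hwinj y p
  have h4 := hwinj y q
  simp only [fmap, Prod.mk.injEq, ne_eq, not_and]
  split_ifs at hinv ⊢ <;>
    simp only [Fin.lt_def, Fin.ext_iff, not_and, not_lt, not_true, true_and, and_true,
      false_and, and_false, true_implies, false_implies, implies_true, not_false_iff] at * <;> omega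

lemma invset_swap_lt (w : Equiv.Perm (Fin N)) (p q : Fin N) (hpq : p < q) (hw : w q < w p) :
    (Finset.univ.filter
      (fun z : Fin N × Fin N => z.1 < z.2 ∧ (w * Equiv.swap p q) z.2 < (w * Equiv.swap p q) z.1)).card
    < (Finset.univ.filter (fun z : Fin N × Fin N => z.1 < z.2 ∧ w z.2 < w z.1)).card := by
  classical
  set S := Finset.univ.filter (fun z : Fin N × Fin N => z.1 < z.2 ∧ w z.2 < w z.1) with hS
  set T := Finset.univ.filter
      (fun z : Fin N × Fin N => z.1 < z.2 ∧ (w * Equiv.swap p q) z.2 < (w * Equiv.swap p q) z.1) with hT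
  have hpqS : (p, q) ∈ S := by
    simp only [hS, Finset.mem_filter, Finset.mem_univ, true_and]
    exact ⟨hpq, hw⟩
  have hmaps : ∀ z ∈ T, fmap p q z ∈ S.erase (p, q) := by
    rintro ⟨x, y⟩ hz
    rw [hT, Finset.mem_filter] at hz
    obtain ⟨-, hxy, hinv⟩ := hz
    obtain ⟨h1, h2⟩ := fmap_mem w p q x y hpq hw hxy hinv
    refine Finset.mem_erase.2 ⟨h2, ?_⟩
    simp only [hS, Finset.mem_filter, Finset.mem_univ, true_and]
    exact ⟨fmap_fst_lt_snd p q hpq x y hxy, h1⟩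
  have hinj : Set.InjOn (fmap p q) T := by
    rintro ⟨x1, y1⟩ h1 ⟨x2, y2⟩ h2 heq
    simp only [hT, Finset.coe_filter, Set.mem_setOf_eq] at h1 h2
    have e1 : fmap p q (fmap p q (x1, y1)) = (x1, y1) := fmap_invol p q hpq x1 y1 h1.2.1
    have e2 : fmap p q (fmap p q (x2, y2)) = (x2, y2) := fmap_invol p q hpq x2 y2 h2.2.1
    rw [← e1, ← e2, heq]
  have hcard : T.card ≤ (S.erase (p, q)).card := Finset.card_le_card_of_injOn _ hmaps hinj
  have : (S.erase (p, q)).card < S.card := Finset.card_erase_lt_of_mem hpqS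
  omega

lemma c0_eq {L m : ℕ} (hm : 0 < m) (i : Fin (L*m)) :
    c0 L m i = ((i.1 % m : ℕ) : ℤ) - ((i.1 / m : ℕ) : ℤ) - m := by
  have h := Nat.div_add_mod i.1 m
  have h' : ((m:ℤ)) * ((i.1/m : ℕ) : ℤ) + ((i.1 % m : ℕ) : ℤ) = (i.1 : ℤ) := by exact_mod_cast h
  unfold c0
  linear_combination -h'

lemma card_le_eq_lt_add_one {n : ℕ} (u : Fin n) (P : Fin n → Prop) [DecidablePred P] (hP : P u) :
    (Finset.univ.filter fun t => t ≤ u ∧ P t).card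
      = (Finset.univ.filter fun t => t < u ∧ P t).card + 1 := by
  have h : (Finset.univ.filter fun t => t ≤ u ∧ P t)
      = insert u (Finset.univ.filter fun t => t < u ∧ P t) := by
    ext t
    simp only [Finset.mem_filter, Finset.mem_univ, true_and, Finset.mem_insert]
    constructor
    · rintro ⟨h1, h2⟩
      rcases eq_or_lt_of_le h1 with h | h
      · exact Or.inl h
      · exact Or.inr ⟨h, h2⟩
    · rintro (rfl | ⟨h1, h2⟩)
      · exact ⟨le_refl _, hP⟩
      · exact ⟨h1.le, h2⟩
  rw [h, Finset.card_insert_of_notMem (by simp)]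

lemma filter_le_card_mono {n : ℕ} (P : Fin n → Prop) [DecidablePred P] {v u : Fin n} (h : v ≤ u) :
    (Finset.univ.filter fun t => t ≤ v ∧ P t).card
      ≤ (Finset.univ.filter fun t => t ≤ u ∧ P t).card := by
  apply Finset.card_le_card
  intro t ht
  simp only [Finset.mem_filter, Finset.mem_univ, true_and] at *
  exact ⟨le_trans ht.1 h, ht.2⟩

lemma filter_lt_le_card {n : ℕ} (P : Fin n → Prop) [DecidablePred P] {v u : Fin n} (h : v < u) :
    (Finset.univ.filter fun t => t ≤ v ∧ P t).card
      ≤ (Finset.univ.filter fun t => t < u ∧ P t).card := by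
  apply Finset.card_le_card
  intro t ht
  simp only [Finset.mem_filter, Finset.mem_univ, true_and] at *
  exact ⟨lt_of_le_of_lt ht.1 h, ht.2⟩

lemma filter_lt_eq_le_pred {n : ℕ} (P : Fin n → Prop) [DecidablePred P] {u t0 : Fin n}
    (h : t0.1 + 1 = u.1) :
    (Finset.univ.filter fun t => t < u ∧ P t).card
      = (Finset.univ.filter fun t => t ≤ t0 ∧ P t).card := by
  congr 1
  ext t
  simp only [Finset.mem_filter, Finset.mem_univ, true_and, Fin.lt_def, Fin.le_def]
  constructor
  · rintro ⟨h1, h2⟩; exact ⟨by omega, h2⟩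
  · rintro ⟨h1, h2⟩; exact ⟨by omega, h2⟩

/-- with `η = γ_λ(λ)`, `w = w_{γ_λ(a)}`, `b = γ_λ(a)`, the sequence
`r = a − Lλ ∈ R_0` is regular — i.e. `(ζ_0, α) ∉ {−1,0,1}` for every
`α ∈ S(x_r)` — if and only if (1) the path `p(b)` is dominant, and (2) for each
pair `i < j` with `b_i = 1`, `b_j = L` and
`#{k ≤ i : b_k = 1} = #{k ≤ j : b_k = L}`, one has `η_j − η_i ∈ {0,1}`. -/
theorem statement_11 (hL : 2 ≤ L) (hm : 1 ≤ m)
    (a : Fin (L * m) → ℕ) (ha : ∀ i, 1 ≤ a i ∧ a i ≤ L)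
    (hmult : ∀ v : ℕ, 1 ≤ v → v ≤ L →
      (Finset.univ.filter fun i => a i = v).card = m)
    (lam : Fin (L * m) → ℤ)
    (hr : Monotone fun i => (a i : ℤ) - L * lam i)
    -- γ = γ_λ : shortest permutation sorting λ into non-decreasing order
    (γ : Equiv.Perm (Fin (L * m)))
    (hγ1 : Monotone fun i => lam (γ.symm i))
    (hγ2 : ∀ γ' : Equiv.Perm (Fin (L * m)),
      (Monotone fun i => lam (γ'.symm i)) → invCount L m γ ≤ invCount L m γ')
    -- w_b for b = γ(a):
    (wb : Equiv.Perm (Fin (L * m)))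
    (hwb1 : ∀ j : Fin (L * m), a (γ.symm (wb j)) = j.1 / m + 1)
    (hwb2 : ∀ i j : Fin (L * m), i < j → i.1 / m = j.1 / m → wb i < wb j) :
    -- regularity of x_r = t_λ · γ⁻¹ · w_b, with finite part σ = γ⁻¹ ∘ w_b:
    (∀ (i j : Fin (L * m)) (k : ℤ), i ≠ j →
      PosRoot L m i j k →
      ¬ PosRoot L m (γ.symm (wb i)) (γ.symm (wb j))
          (k - lam (γ.symm (wb i)) + lam (γ.symm (wb j))) →
      (c0 L m i - c0 L m j + k * L ∉ ({-1, 0, 1} : Set ℤ)))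
    ↔
    -- (1) the path of b = γ(a) is dominant:
    ((∀ (i : Fin (L * m)) (c : ℕ), 1 ≤ c → c < L →
        (Finset.univ.filter fun t => t ≤ i ∧ a (γ.symm t) = c + 1).card
          ≤ (Finset.univ.filter fun t => t ≤ i ∧ a (γ.symm t) = c).card) ∧
    -- (2) the pairing condition on η = γ(λ):
      (∀ i j : Fin (L * m), i < j → a (γ.symm i) = 1 → a (γ.symm j) = L →
        (Finset.univ.filter fun t => t ≤ i ∧ a (γ.symm t) = 1).card
          = (Finset.univ.filter fun t => t ≤ j ∧ a (γ.symm t) = L).card →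
        lam (γ.symm j) - lam (γ.symm i) = 0 ∨ lam (γ.symm j) - lam (γ.symm i) = 1)) := by
  have hm0 : 0 < m := hm
  have hL1 : 1 ≤ L := le_trans one_le_two hL
  -- basic arithmetic helpers
  have hcm : ∀ c : ℕ, 1 ≤ c → (c-1)*m + m = c*m := by
    intro c hc
    have h1 : c - 1 + 1 = c := by omega
    calc (c-1)*m + m = ((c-1)+1)*m := (Nat.succ_mul _ _).symm
    _ = c*m := by rw [h1]
  have hbound : ∀ c q : ℕ, c < L → q < m → c*m + q < L*m := by
    intro c q hc hq
    have h1 : c*m + q < (c+1)*m := by rw [Nat.succ_mul]; omega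
    exact lt_of_lt_of_le h1 (Nat.mul_le_mul_right m hc)
  have hdivmk : ∀ c q : ℕ, q < m → (c*m + q)/m = c := by
    intro c q hq
    exact (div_helper hm0 c _).mpr ⟨Nat.le_add_right _ _, by omega⟩
  have hmodmk : ∀ c q : ℕ, q < m → (c*m + q) % m = q := by
    intro c q hq
    rw [add_comm, Nat.add_mul_mod_self_right, Nat.mod_eq_of_lt hq]
  -- antitonicity of lam
  have hlam_anti : ∀ p q : Fin (L*m), p ≤ q → lam q ≤ lam p := by
    intro p q hpq
    by_contra hcon
    push_neg at hcon
    have h1 := hr hpq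
    simp only at h1
    have h2 : (1:ℤ) ≤ lam q - lam p := by omega
    have h3 : (L:ℤ) * 1 ≤ (L:ℤ) * (lam q - lam p) :=
      mul_le_mul_of_nonneg_left h2 (by positivity)
    rw [mul_sub, mul_one] at h3
    have h4 : (1:ℤ) ≤ a p := by exact_mod_cast (ha p).1
    have h5 : (a q:ℤ) ≤ L := by exact_mod_cast (ha q).2
    have hL' : (2:ℤ) ≤ L := by exact_mod_cast hL
    linarith
  -- stability of γ
  have hswap : ∀ p q : Fin (L*m), p < q → γ q < γ p →
      invCount L m (γ * Equiv.swap p q) < invCount L m γ :=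
    fun p q h1 h2 => invset_swap_lt γ p q h1 h2
  have hstab : ∀ p q : Fin (L*m), p < q → lam p = lam q → γ p < γ q := by
    intro p q hpq hl
    by_contra hcon
    have hne : γ p ≠ γ q := fun h => absurd (γ.injective h) (ne_of_lt hpq)
    have hgt : γ q < γ p := lt_of_le_of_ne (not_lt.1 hcon) (Ne.symm hne)
    have hmono : Monotone fun i => lam ((γ * Equiv.swap p q).symm i) := by
      have hfun : ∀ i, lam ((γ * Equiv.swap p q).symm i) = lam (γ.symm i) := by
        intro i
        have hsm : (γ * Equiv.swap p q).symm i = Equiv.swap p q (γ.symm i) := by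
          rw [Equiv.symm_apply_eq]
          have : (γ * Equiv.swap p q) (Equiv.swap p q (γ.symm i)) = i := by
            simp [Equiv.Perm.mul_apply, Equiv.swap_apply_self]
          exact this.symm
        rw [hsm]
        rcases eq_or_ne (γ.symm i) p with h | h
        · rw [h, Equiv.swap_apply_left, ← hl]
        · rcases eq_or_ne (γ.symm i) q with h2 | h2
          · rw [h2, Equiv.swap_apply_right, hl]
          · rw [Equiv.swap_apply_of_ne_of_ne h h2]
      intro x y hxy
      simp only [hfun]
      exact hγ1 hxy
    exact absurd (hγ2 _ hmono) (not_le.2 (hswap p q hpq hgt))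
  have hstabS : ∀ t1 t2 : Fin (L*m), t1 < t2 → lam (γ.symm t1) = lam (γ.symm t2) →
      γ.symm t1 < γ.symm t2 := by
    intro t1 t2 h hl
    rcases lt_trichotomy (γ.symm t1) (γ.symm t2) with h' | h' | h'
    · exact h'
    · exact absurd (γ.symm.injective h') (ne_of_lt h)
    · have h2 := hstab _ _ h' hl.symm
      rw [Equiv.apply_symm_apply, Equiv.apply_symm_apply] at h2
      exact absurd h2 (not_lt.2 h.le)
  have hF6 : ∀ u v : Fin (L*m), γ.symm u < γ.symm v →
      lam (γ.symm v) < lam (γ.symm u) ∨ (lam (γ.symm u) = lam (γ.symm v) ∧ u < v) := by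
    intro u v h
    rcases lt_trichotomy (lam (γ.symm u)) (lam (γ.symm v)) with h1 | h1 | h1
    · exfalso
      have := hlam_anti _ _ h.le
      omega
    · right
      refine ⟨h1, ?_⟩
      rcases lt_trichotomy u v with h2 | h2 | h2
      · exact h2
      · exact absurd h (by rw [h2]; exact lt_irrefl _)
      · exact absurd (hstabS v u h2 h1.symm) (not_lt.2 h.le)
    · left; exact h1
  have hb5 : ∀ u v : Fin (L*m), u ≤ v → lam (γ.symm u) = lam (γ.symm v) →
      a (γ.symm u) ≤ a (γ.symm v) := by
    intro u v h he
    rcases eq_or_lt_of_le h with rfl | h'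
    · exact le_rfl
    · have hg := hstabS u v h' he
      have hrr := hr hg.le
      simp only at hrr
      rw [he] at hrr
      have : (a (γ.symm u) : ℤ) ≤ a (γ.symm v) := by linarith
      exact_mod_cast this
  -- counting lemmas
  have htot : ∀ a0 : ℕ, 1 ≤ a0 → a0 ≤ L →
      (Finset.univ.filter fun t => a (γ.symm t) = a0).card = m := by
    intro a0 h1 h2
    have himg : (Finset.univ.filter fun t => a (γ.symm t) = a0)
        = (Finset.univ.filter (fun j : Fin (L*m) => j.1/m = a0 - 1)).image wb := by
      ext t
      simp only [Finset.mem_filter, Finset.mem_univ, true_and, Finset.mem_image]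
      constructor
      · intro hv
        refine ⟨wb.symm t, ?_, Equiv.apply_symm_apply wb t⟩
        have h3 := hwb1 (wb.symm t)
        rw [Equiv.apply_symm_apply] at h3
        omega
      · rintro ⟨x, hx, rfl⟩
        rw [hwb1 x]; omega
    rw [himg, Finset.card_image_of_injective _ wb.injective, card_block hm0 _ (by omega)]
  have hNlt : ∀ j : Fin (L*m),
      (Finset.univ.filter fun t => t < wb j ∧ a (γ.symm t) = j.1/m + 1).card = j.1 % m := by
    intro j
    have himg : (Finset.univ.filter fun t => t < wb j ∧ a (γ.symm t) = j.1/m + 1)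
        = (Finset.univ.filter (fun x : Fin (L*m) => x.1 < j.1 ∧ x.1/m = j.1/m)).image wb := by
      ext t
      simp only [Finset.mem_filter, Finset.mem_univ, true_and, Finset.mem_image]
      constructor
      · rintro ⟨hlt, hv⟩
        have h3 := hwb1 (wb.symm t)
        rw [Equiv.apply_symm_apply] at h3
        refine ⟨wb.symm t, ⟨?_, by omega⟩, Equiv.apply_symm_apply wb t⟩
        rcases lt_trichotomy (wb.symm t) j with h | h | h
        · exact Fin.lt_def.mp h
        · exfalso
          have h5 : wb (wb.symm t) = wb j := congrArg wb h
          rw [Equiv.apply_symm_apply] at h5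
          rw [h5] at hlt
          exact lt_irrefl _ hlt
        · exfalso
          have h4 := hwb2 j (wb.symm t) h (by omega)
          rw [Equiv.apply_symm_apply] at h4
          exact lt_irrefl _ (h4.trans hlt)
      · rintro ⟨x, ⟨hx1, hx2⟩, rfl⟩
        exact ⟨hwb2 x j (Fin.lt_def.mpr hx1) hx2, by rw [hwb1 x, hx2]⟩
    rw [himg, Finset.card_image_of_injective _ wb.injective, card_slot hm0 j]
  have hval1 : ∀ (x : ℕ) (hx : x < L*m), a (γ.symm (wb ⟨x, hx⟩)) = x / m + 1 :=
    fun x hx => hwb1 ⟨x, hx⟩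
  have hNltM : ∀ (x : ℕ) (hx : x < L*m),
      (Finset.univ.filter fun t => t < wb ⟨x, hx⟩ ∧ a (γ.symm t) = x/m + 1).card = x % m :=
    fun x hx => hNlt ⟨x, hx⟩
  have c0_mk : ∀ (x : ℕ) (hx : x < L*m),
      c0 L m ⟨x, hx⟩ = ((x % m : ℕ) : ℤ) - ((x / m : ℕ) : ℤ) - m :=
    fun x hx => c0_eq hm0 ⟨x, hx⟩
  have hmono2 : ∀ (a0 : ℕ) (u1 u2 : Fin (L*m)), u1 < u2 → a (γ.symm u1) = a0 →
      (Finset.univ.filter fun t => t < u1 ∧ a (γ.symm t) = a0).card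
        < (Finset.univ.filter fun t => t < u2 ∧ a (γ.symm t) = a0).card := by
    intro a0 u1 u2 h hv
    have h1 := card_le_eq_lt_add_one u1 (fun t => a (γ.symm t) = a0) hv
    have h2 := filter_lt_le_card (fun t => a (γ.symm t) = a0) h
    omega
  have huniq : ∀ (a0 : ℕ) (u1 u2 : Fin (L*m)), a (γ.symm u1) = a0 → a (γ.symm u2) = a0 →
      (Finset.univ.filter fun t => t < u1 ∧ a (γ.symm t) = a0).card
        = (Finset.univ.filter fun t => t < u2 ∧ a (γ.symm t) = a0).card → u1 = u2 := by
    intro a0 u1 u2 hv1 hv2 hc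
    rcases lt_trichotomy u1 u2 with h | h | h
    · exact absurd hc (ne_of_lt (hmono2 a0 u1 u2 h hv1))
    · exact h
    · exact absurd hc.symm (ne_of_lt (hmono2 a0 u2 u1 h hv2))
  have hqmax : ∀ (a0 : ℕ), 1 ≤ a0 → a0 ≤ L → ∀ t0 : Fin (L*m),
      (Finset.univ.filter fun t => t ≤ t0 ∧ a (γ.symm t) = a0).card ≤ m := by
    intro a0 h1 h2 t0
    calc (Finset.univ.filter fun t => t ≤ t0 ∧ a (γ.symm t) = a0).card
        ≤ (Finset.univ.filter fun t => a (γ.symm t) = a0).card := by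
          apply Finset.card_le_card
          intro t ht
          simp only [Finset.mem_filter, Finset.mem_univ, true_and] at *
          exact ht.2
    _ = m := htot a0 h1 h2
  constructor
  · -- regular ⟹ (1) ∧ (2)
    intro hreg
    constructor
    · -- (1) dominance
      intro i0 c hc1 hcL
      by_contra hcon
      push_neg at hcon
      set q := (Finset.univ.filter fun t => t ≤ i0 ∧ a (γ.symm t) = c).card with hq
      have hqm : q < m := by
        have h1 := hqmax (c+1) (by omega) (by omega) i0
        omega
      have hbU : c*m + q < L*m := hbound c q hcL hqm
      have hbV : (c-1)*m + q < L*m := hbound (c-1) q (by omega) hqm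
      have hbu : a (γ.symm (wb ⟨c*m+q, hbU⟩)) = c + 1 := by
        rw [hval1 _ hbU, hdivmk c q hqm]
      have hcu : (Finset.univ.filter fun t =>
          t < wb ⟨c*m+q, hbU⟩ ∧ a (γ.symm t) = c + 1).card = q := by
        have h := hNltM (c*m+q) hbU
        simp only [hdivmk c q hqm, hmodmk c q hqm] at h
        exact h
      have hbv : a (γ.symm (wb ⟨(c-1)*m+q, hbV⟩)) = c := by
        rw [hval1 _ hbV, hdivmk (c-1) q hqm]; omega
      have hcv : (Finset.univ.filter fun t =>
          t < wb ⟨(c-1)*m+q, hbV⟩ ∧ a (γ.symm t) = c).card = q := by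
        have h := hNltM ((c-1)*m+q) hbV
        simp only [hdivmk (c-1) q hqm, hmodmk (c-1) q hqm,
          Nat.sub_add_cancel hc1] at h
        exact h
      have hu_le : wb ⟨c*m+q, hbU⟩ ≤ i0 := by
        by_contra hcu2
        push_neg at hcu2
        have h3 := filter_lt_le_card (fun t => a (γ.symm t) = c+1) hcu2
        omega
      have hv_gt : i0 < wb ⟨(c-1)*m+q, hbV⟩ := by
        by_contra hcv2
        push_neg at hcv2
        have h1 := card_le_eq_lt_add_one _ (fun t => a (γ.symm t) = c) hbv
        have h2 := filter_le_card_mono (fun t => a (γ.symm t) = c) hcv2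
        omega
      have huv : wb ⟨c*m+q, hbU⟩ < wb ⟨(c-1)*m+q, hbV⟩ := lt_of_le_of_lt hu_le hv_gt
      have hεne : lam (γ.symm (wb ⟨c*m+q, hbU⟩)) ≠ lam (γ.symm (wb ⟨(c-1)*m+q, hbV⟩)) := by
        intro he
        have h1 := hb5 _ _ huv.le he
        rw [hbu, hbv] at h1
        omega
      have hεlt : lam (γ.symm (wb ⟨c*m+q, hbU⟩)) < lam (γ.symm (wb ⟨(c-1)*m+q, hbV⟩)) :=
        lt_of_le_of_ne (hγ1 huv.le) hεne
      refine hreg ⟨(c-1)*m+q, hbV⟩ ⟨c*m+q, hbU⟩ 0 ?_ ?_ ?_ ?_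
      · intro h
        have h1 := congrArg Fin.val h
        simp only at h1
        have h2 := hcm c hc1
        omega
      · refine Or.inr ⟨rfl, ?_⟩
        rw [Fin.lt_def]
        simp only
        have h2 := hcm c hc1
        omega
      · intro hP
        simp only [PosRoot] at hP
        rcases hP with h | ⟨h, -⟩ <;> omega
      · have e1 := c0_mk ((c-1)*m+q) hbV
        have e2 := c0_mk (c*m+q) hbU
        rw [hdivmk (c-1) q hqm, hmodmk (c-1) q hqm] at e1
        rw [hdivmk c q hqm, hmodmk c q hqm] at e2
        rw [e1, e2, Nat.cast_sub hc1]
        simp only [Set.mem_insert_iff, Set.mem_singleton_iff]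
        right; right
        ring
    · -- (2)
      intro i0 j0 hlt hb1 hbL hcnt
      by_contra hcon
      push_neg at hcon
      obtain ⟨hne0, hne1⟩ := hcon
      have hd2 : 2 ≤ lam (γ.symm j0) - lam (γ.symm i0) := by
        have h1 := hγ1 hlt.le
        beta_reduce at h1
        omega
      set s := (Finset.univ.filter fun t => t < j0 ∧ a (γ.symm t) = L).card with hs
      have hNlej0 : (Finset.univ.filter fun t => t ≤ j0 ∧ a (γ.symm t) = L).card = s + 1 :=
        card_le_eq_lt_add_one j0 _ hbL
      have hNlti0 : (Finset.univ.filter fun t => t < i0 ∧ a (γ.symm t) = 1).card = s := by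
        have h1 := card_le_eq_lt_add_one i0 (fun t => a (γ.symm t) = 1) hb1
        omega
      have hsm : s < m := by
        have := hqmax L hL1 le_rfl j0
        omega
      have hbI : (L-1)*m + s < L*m := hbound (L-1) s (by omega) hsm
      have hbJ : s < L*m := lt_of_lt_of_le hsm (Nat.le_mul_of_pos_left m (by omega))
      have hdivs : s / m = 0 := Nat.div_eq_of_lt hsm
      have hmods : s % m = s := Nat.mod_eq_of_lt hsm
      have hwJ : wb ⟨(L-1)*m + s, hbI⟩ = j0 := by
        apply huniq L
        · rw [hval1 _ hbI, hdivmk (L-1) s hsm]; omega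
        · exact hbL
        · have h := hNltM ((L-1)*m + s) hbI
          simp only [hdivmk (L-1) s hsm, hmodmk (L-1) s hsm,
            Nat.sub_add_cancel hL1] at h
          exact h.trans hs
      have hwI : wb ⟨s, hbJ⟩ = i0 := by
        apply huniq 1
        · rw [hval1 _ hbJ, hdivs]
        · exact hb1
        · have h := hNltM s hbJ
          simp only [hdivs, hmods, Nat.zero_add] at h
          exact h.trans hNlti0.symm
      refine hreg ⟨(L-1)*m + s, hbI⟩ ⟨s, hbJ⟩ 1 ?_ (Or.inl one_pos) ?_ ?_
      · intro h
        have h1 := congrArg Fin.val h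
        simp only at h1
        have h2 := hcm L hL1
        have h3 : 2*m ≤ L*m := Nat.mul_le_mul_right m hL
        omega
      · rw [hwJ, hwI]
        intro hP
        simp only [PosRoot] at hP
        rcases hP with h | ⟨h, -⟩ <;> omega
      · have e1 := c0_mk ((L-1)*m+s) hbI
        have e2 := c0_mk s hbJ
        rw [hdivmk (L-1) s hsm, hmodmk (L-1) s hsm] at e1
        rw [hdivs, hmods] at e2
        rw [e1, e2, Nat.cast_sub hL1]
        simp only [Set.mem_insert_iff, Set.mem_singleton_iff, Nat.cast_zero]
        right; right
        ring
  · -- (1) ∧ (2) ⟹ regular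
    rintro ⟨hdom, hpair⟩ i j k hij hpos hneg hmem
    have hchain : ∀ (i0 : Fin (L*m)) (c c' : ℕ), 1 ≤ c → c ≤ c' → c' ≤ L →
        (Finset.univ.filter fun t => t ≤ i0 ∧ a (γ.symm t) = c').card
          ≤ (Finset.univ.filter fun t => t ≤ i0 ∧ a (γ.symm t) = c).card := by
      intro i0 c c' h1 h2
      induction c', h2 using Nat.le_induction with
      | base => intro _; exact le_rfl
      | succ k hk ih =>
        intro hkL
        exact le_trans (hdom i0 k (h1.trans hk) (by omega)) (ih (by omega))
    simp only [Set.mem_insert_iff, Set.mem_singleton_iff] at hmem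
    have hpos' : 0 < k ∨ (k = 0 ∧ i < j) := hpos
    have hneg' : ¬(0 < k - lam (γ.symm (wb i)) + lam (γ.symm (wb j)) ∨
        (k - lam (γ.symm (wb i)) + lam (γ.symm (wb j)) = 0 ∧
          γ.symm (wb i) < γ.symm (wb j))) := hneg
    push_neg at hneg'
    obtain ⟨hk1, hk2⟩ := hneg'
    have hkge : 0 ≤ k := by rcases hpos' with h | ⟨h, -⟩ <;> omega
    have hσne : γ.symm (wb i) ≠ γ.symm (wb j) :=
      fun h => hij (wb.injective (γ.symm.injective h))
    have hc0i := c0_eq hm0 i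
    have hc0j := c0_eq hm0 j
    obtain ⟨Bi, hgBi⟩ : ∃ x, i.1 / m = x := ⟨_, rfl⟩
    obtain ⟨Bj, hgBj⟩ : ∃ x, j.1 / m = x := ⟨_, rfl⟩
    obtain ⟨si, hgsi⟩ : ∃ x, i.1 % m = x := ⟨_, rfl⟩
    obtain ⟨sj, hgsj⟩ : ∃ x, j.1 % m = x := ⟨_, rfl⟩
    have hsim : si < m := by rw [← hgsi]; exact Nat.mod_lt _ hm0
    have hsjm : sj < m := by rw [← hgsj]; exact Nat.mod_lt _ hm0
    have hBiL : Bi < L := by rw [← hgBi]; exact (Nat.div_lt_iff_lt_mul hm0).2 i.2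
    have hBjL : Bj < L := by rw [← hgBj]; exact (Nat.div_lt_iff_lt_mul hm0).2 j.2
    rw [hgBi, hgsi] at hc0i
    rw [hgBj, hgsj] at hc0j
    by_cases hkd : k - lam (γ.symm (wb i)) + lam (γ.symm (wb j)) = 0
    · -- k = d case
      have hσlt : γ.symm (wb j) < γ.symm (wb i) :=
        lt_of_le_of_ne (hk2 hkd) (Ne.symm hσne)
      rcases hF6 (wb j) (wb i) hσlt with h6 | ⟨h6a, h6b⟩
      · omega
      · have hk0 : k = 0 := by omega
        have hij' : i < j := by
          rcases hpos' with h | ⟨-, h⟩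
          · omega
          · exact h
        have hble := hb5 _ _ h6b.le h6a
        rw [hwb1 i, hwb1 j, hgBi, hgBj] at hble
        have hdivle : Bi ≤ Bj := by
          rw [← hgBi, ← hgBj]
          exact Nat.div_le_div_right (Fin.lt_def.mp hij').le
        have hdeq : Bi = Bj := by omega
        exact absurd (hwb2 i j hij' (by rw [hgBi, hgBj, hdeq])) (not_lt.2 h6b.le)
    · -- k' < 0
      have hklt : k - lam (γ.symm (wb i)) + lam (γ.symm (wb j)) < 0 :=
        lt_of_le_of_ne hk1 hkd
      have hηlt : lam (γ.symm (wb j)) < lam (γ.symm (wb i)) := by omega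
      have hvu : wb j < wb i := by
        rcases lt_or_ge (wb j) (wb i) with h | h
        · exact h
        · exact absurd (hγ1 h) (not_le.2 hηlt)
      by_cases hk0 : k = 0
      · -- dominance kills this
        subst hk0
        have hij' : i < j := by
          rcases hpos' with h | ⟨-, h⟩
          · omega
          · exact h
        have hdivle : Bi ≤ Bj := by
          rw [← hgBi, ← hgBj]
          exact Nat.div_le_div_right (Fin.lt_def.mp hij').le
        have hdne : Bi ≠ Bj := by
          intro h
          exact absurd (hwb2 i j hij' (by rw [hgBi, hgBj, h])) (not_lt.2 hvu.le)
        have hBij : Bi < Bj := lt_of_le_of_ne hdivle hdne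
        have hbv : a (γ.symm (wb j)) = Bj + 1 := by rw [hwb1 j, hgBj]
        have h1 : (Finset.univ.filter fun t => t ≤ wb j ∧ a (γ.symm t) = Bj+1).card
            = (Finset.univ.filter fun t => t < wb j ∧ a (γ.symm t) = Bj+1).card + 1 :=
          card_le_eq_lt_add_one _ _ hbv
        have h2 := hNlt j
        simp only [hgBj, hgsj] at h2
        have h3 := hchain (wb j) (Bi+1) (Bj+1) (by omega) (by omega) (by omega)
        have h4 := filter_lt_le_card (fun t => a (γ.symm t) = Bi+1) hvu
        have h5 := hNlt i
        simp only [hgBi, hgsi] at h5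
        have hq1 : sj + 1 ≤ si := by omega
        rw [hc0i, hc0j] at hmem
        have hcast1 : ((sj:ℕ):ℤ) + 1 ≤ ((si:ℕ):ℤ) := by exact_mod_cast hq1
        have hcast2 : ((Bi:ℕ):ℤ) + 1 ≤ ((Bj:ℕ):ℤ) := by exact_mod_cast hBij
        rcases hmem with h | h | h <;> linarith
      · -- k ≥ 1 : use condition (2)
        have hk1' : (1:ℤ) ≤ k := by omega
        have hL' : (2:ℤ) ≤ L := by exact_mod_cast hL
        have hkL : (L:ℤ) ≤ k * L := le_mul_of_one_le_left (by positivity) hk1'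
        have hsisj : si ≤ sj := by
          rw [hc0i, hc0j] at hmem
          have hbi' : ((Bi:ℕ):ℤ) ≤ (L:ℤ) - 1 := by
            have h2 : ((Bi:ℕ):ℤ) + 1 ≤ ((L:ℕ):ℤ) := by exact_mod_cast hBiL
            omega
          have hbj' : (0:ℤ) ≤ ((Bj:ℕ):ℤ) := by positivity
          have hfin : ((si:ℕ):ℤ) ≤ ((sj:ℕ):ℤ) := by
            rcases hmem with h | h | h <;> linarith
          exact_mod_cast hfin
        have hu1 : 1 ≤ (wb i).1 := by
          have := Fin.lt_def.mp hvu
          omega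
        have ht0b : (wb i).1 - 1 < L*m := by
          have := (wb i).2
          omega
        set t0 : Fin (L*m) := ⟨(wb i).1 - 1, ht0b⟩ with ht0
        have ht0u : t0.1 + 1 = (wb i).1 := by
          simp only [ht0]
          omega
        have hbv : a (γ.symm (wb j)) = Bj + 1 := by rw [hwb1 j, hgBj]
        have hA1 : (Finset.univ.filter fun t => t ≤ wb j ∧ a (γ.symm t) = Bj+1).card
            = sj + 1 := by
          have hx := card_le_eq_lt_add_one (wb j) (fun t => a (γ.symm t) = Bj+1) hbv
          have hy := hNlt j
          simp only [hgBj, hgsj] at hy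
          rw [hx, hy]
        have hA2 := hchain (wb j) 1 (Bj+1) le_rfl (by omega) (by omega)
        have hB1 : (Finset.univ.filter fun t => t < wb i ∧ a (γ.symm t) = L).card
            = (Finset.univ.filter fun t => t ≤ t0 ∧ a (γ.symm t) = L).card :=
          filter_lt_eq_le_pred _ ht0u
        have hB2 := hchain t0 (Bi+1) L (by omega) (by omega) le_rfl
        have hB3 : (Finset.univ.filter fun t => t < wb i ∧ a (γ.symm t) = Bi+1).card
            = (Finset.univ.filter fun t => t ≤ t0 ∧ a (γ.symm t) = Bi+1).card :=
          filter_lt_eq_le_pred _ ht0u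
        have hB4 := hNlt i
        simp only [hgBi, hgsi] at hB4
        set sB := (Finset.univ.filter fun t => t < wb i ∧ a (γ.symm t) = L).card with hsB
        have hsBm : sB < m := by omega
        have hsBlt : sB < (Finset.univ.filter fun t => t ≤ wb j ∧ a (γ.symm t) = 1).card := by
          omega
        have hbi0' : sB < L*m := lt_of_lt_of_le hsBm (Nat.le_mul_of_pos_left m (by omega))
        have hbj0' : (L-1)*m + sB < L*m := hbound (L-1) sB (by omega) hsBm
        have hdivsB : sB / m = 0 := Nat.div_eq_of_lt hsBm
        have hmodsB : sB % m = sB := Nat.mod_eq_of_lt hsBm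
        have hbi0 : a (γ.symm (wb ⟨sB, hbi0'⟩)) = 1 := by
          rw [hval1 _ hbi0', hdivsB]
        have hci0 : (Finset.univ.filter fun t =>
            t < wb ⟨sB, hbi0'⟩ ∧ a (γ.symm t) = 1).card = sB := by
          have h := hNltM sB hbi0'
          simp only [hdivsB, hmodsB, Nat.zero_add] at h
          exact h
        have hbj0 : a (γ.symm (wb ⟨(L-1)*m+sB, hbj0'⟩)) = L := by
          rw [hval1 _ hbj0', hdivmk (L-1) sB hsBm]; omega
        have hcj0 : (Finset.univ.filter fun t =>
            t < wb ⟨(L-1)*m+sB, hbj0'⟩ ∧ a (γ.symm t) = L).card = sB := by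
          have h := hNltM ((L-1)*m+sB) hbj0'
          simp only [hdivmk (L-1) sB hsBm, hmodmk (L-1) sB hsBm,
            Nat.sub_add_cancel hL1] at h
          exact h
        have hi0v : wb ⟨sB, hbi0'⟩ ≤ wb j := by
          by_contra hcc
          push_neg at hcc
          have h3 := filter_lt_le_card (fun t => a (γ.symm t) = 1) hcc
          omega
        have hj0u : wb i ≤ wb ⟨(L-1)*m+sB, hbj0'⟩ := by
          by_contra hcc
          push_neg at hcc
          have hle : wb ⟨(L-1)*m+sB, hbj0'⟩ ≤ t0 := by
            rw [Fin.le_def]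
            have := Fin.lt_def.mp hcc
            simp only [ht0]
            omega
          have hh1 := card_le_eq_lt_add_one (wb ⟨(L-1)*m+sB, hbj0'⟩)
            (fun t => a (γ.symm t) = L) hbj0
          have hh2 := filter_le_card_mono (fun t => a (γ.symm t) = L) hle
          omega
        have hi0j0 : wb ⟨sB, hbi0'⟩ < wb ⟨(L-1)*m+sB, hbj0'⟩ :=
          lt_of_le_of_lt hi0v (lt_of_lt_of_le hvu hj0u)
        have hcnteq : (Finset.univ.filter fun t =>
              t ≤ wb ⟨sB, hbi0'⟩ ∧ a (γ.symm t) = 1).card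
            = (Finset.univ.filter fun t =>
              t ≤ wb ⟨(L-1)*m+sB, hbj0'⟩ ∧ a (γ.symm t) = L).card := by
          have hx1 := card_le_eq_lt_add_one (wb ⟨sB, hbi0'⟩) (fun t => a (γ.symm t) = 1) hbi0
          have hx2 := card_le_eq_lt_add_one (wb ⟨(L-1)*m+sB, hbj0'⟩)
            (fun t => a (γ.symm t) = L) hbj0
          rw [hx1, hx2, hci0, hcj0]
        have hres := hpair _ _ hi0j0 hbi0 hbj0 hcnteq
        have he1 := hγ1 hi0v
        have he2 := hγ1 hj0u
        beta_reduce at he1 he2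
        omega


end RegSeq

end
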